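/- Let $(\Omega, \mathcal{A}, \mu)$ be a measure space and $\alpha \colon \Omega \to [0, \infty]$ a measurable function with $\int \alpha \, d\mu = \infty$. Then there either exists a $\sigma$-finite measurable set $A$ with $\int_A \alpha \, d\mu = \infty$, or a $\mu$-atom $A$ of infinite measure with $\int_A \alpha \, d\mu = \infty$. -/

import Mathlib

open MeasureTheory ENNReal

/-- Auxiliary: if `c < α` on a set of infinite measure and `c ≠ 0`, the integral diverges. -/
lemma aux_setLIntegral_top {Ω : Type*} [MeasurableSpace Ω] (μ : Measure Ω)
    (α : Ω → ℝ≥0∞) {A : Set Ω} (hA : MeasurableSet A) {c : ℝ≥0∞} (hc : c ≠ 0)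
    (hbound : ∀ ω ∈ A, c ≤ α ω) (hμA : μ A = ⊤) :
    ∫⁻ ω in A, α ω ∂μ = ⊤ := by
  have h1 : ∫⁻ _ in A, c ∂μ ≤ ∫⁻ ω in A, α ω ∂μ := setLIntegral_mono' hA hbound
  rw [setLIntegral_const, hμA, ENNReal.mul_top hc] at h1
  exact top_le_iff.mp h1

/-- If `α : Ω → [0,∞]` is measurable with `∫ α dμ = ∞`, then there is either a
σ-finite measurable set over which the integral diverges, or a μ-atom of infinite measure
over which the integral diverges. -/
theorem divergent_subintegral {Ω : Type*} [MeasurableSpace Ω] (μ : Measure Ω)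
    (α : Ω → ℝ≥0∞) (hα : Measurable α) (hdiv : ∫⁻ ω, α ω ∂μ = ⊤) :
    (∃ A : Set Ω, MeasurableSet A ∧
      (∃ g : ℕ → Set Ω, A = ⋃ n, g n ∧ ∀ n, MeasurableSet (g n) ∧ μ (g n) < ⊤) ∧
      ∫⁻ ω in A, α ω ∂μ = ⊤) ∨
    (∃ A : Set Ω, MeasurableSet A ∧ μ A = ⊤ ∧
      (∀ B ⊆ A, MeasurableSet B → μ B = 0 ∨ μ B = μ A) ∧
      ∫⁻ ω in A, α ω ∂μ = ⊤) := by
  classical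
  set g : ℕ → Set Ω := fun n => {ω | ((n : ℝ≥0∞) + 1)⁻¹ < α ω} with hg
  have hgm : ∀ n, MeasurableSet (g n) := fun n =>
    measurableSet_lt measurable_const hα
  have hsupp : Function.support α ⊆ ⋃ n, g n := by
    intro x hx
    obtain ⟨n, hn⟩ := ENNReal.exists_inv_nat_lt (Function.mem_support.mp hx)
    refine Set.mem_iUnion.mpr ⟨n, ?_⟩
    exact lt_of_le_of_lt (ENNReal.inv_le_inv.mpr (le_add_of_nonneg_right zero_le_one)) hn
  have hUnion_meas : MeasurableSet (⋃ n, g n) := MeasurableSet.iUnion hgm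
  have hint : ∫⁻ ω in ⋃ n, g n, α ω ∂μ = ⊤ := by
    rw [setLIntegral_eq_of_support_subset hsupp]; exact hdiv
  by_cases hfin : ∀ n, μ (g n) < ⊤
  · exact Or.inl ⟨⋃ n, g n, hUnion_meas, ⟨g, rfl, fun n => ⟨hgm n, hfin n⟩⟩, hint⟩
  push_neg at hfin
  obtain ⟨n, hn⟩ := hfin
  have hEinf : μ (g n) = ⊤ := top_le_iff.mp hn
  set E := g n with hE
  set c : ℝ≥0∞ := ((n : ℝ≥0∞) + 1)⁻¹ with hc
  have hc0 : c ≠ 0 :=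
    ENNReal.inv_ne_zero.mpr (ENNReal.add_ne_top.mpr ⟨ENNReal.natCast_ne_top n, one_ne_top⟩)
  have hEmeas : MeasurableSet E := hgm n
  have hbound : ∀ ω ∈ E, c ≤ α ω := fun ω hω => le_of_lt hω
  -- the family of finite-measure measurable subsets of E
  set S : Set ℝ≥0∞ := (fun B => μ B) '' {B : Set Ω | MeasurableSet B ∧ B ⊆ E ∧ μ B < ⊤} with hS
  have hS0 : (0 : ℝ≥0∞) ∈ S := ⟨∅, ⟨MeasurableSet.empty, Set.empty_subset _, by simp⟩, by simp⟩
  by_cases hsup : sSup S = ⊤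
  · -- σ-finite case: pick subsets of arbitrarily large finite measure
    have hchoice : ∀ k : ℕ, ∃ B : Set Ω, MeasurableSet B ∧ B ⊆ E ∧ μ B < ⊤ ∧ (k : ℝ≥0∞) < μ B := by
      intro k
      obtain ⟨b, hbS, hkb⟩ := (sSup_eq_top.mp hsup) (k : ℝ≥0∞) (ENNReal.natCast_lt_top k)
      obtain ⟨B, ⟨hBm, hBE, hBfin⟩, hb⟩ := hbS
      exact ⟨B, hBm, hBE, hBfin, by rw [show μ B = b from hb]; exact hkb⟩
    choose B hBm hBE hBfin hBlt using hchoice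
    have hAm : MeasurableSet (⋃ k, B k) := MeasurableSet.iUnion hBm
    have hAsub : (⋃ k, B k) ⊆ E := Set.iUnion_subset hBE
    have hAinf : μ (⋃ k, B k) = ⊤ := by
      by_contra h
      obtain ⟨m, hm⟩ := ENNReal.exists_nat_gt h
      exact absurd (lt_of_lt_of_le (hBlt m) (measure_mono (Set.subset_iUnion B m)))
        (not_lt.mpr hm.le)
    refine Or.inl ⟨⋃ k, B k, hAm, ⟨B, rfl, fun k => ⟨hBm k, hBfin k⟩⟩, ?_⟩
    exact aux_setLIntegral_top μ α hAm hc0 (fun ω hω => hbound ω (hAsub hω)) hAinf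
  · -- atom case
    have hsne : S.Nonempty := ⟨0, hS0⟩
    obtain ⟨u, humono, hutend, huS⟩ := exists_seq_tendsto_sSup hsne (OrderTop.bddAbove S)
    have huS' : ∀ k, ∃ B : Set Ω, MeasurableSet B ∧ B ⊆ E ∧ μ B < ⊤ ∧ μ B = u k := by
      intro k
      obtain ⟨B, ⟨h1, h2, h3⟩, h4⟩ := huS k
      exact ⟨B, h1, h2, h3, h4⟩
    choose B hBm hBE hBfin hBu using huS'
    -- hBu : μ (B k) = u k  (image: ∃ B, ... ∧ μ B = u k), careful with direction
    set D := ⋃ k, B k with hD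
    have hDm : MeasurableSet D := MeasurableSet.iUnion hBm
    have hDE : D ⊆ E := Set.iUnion_subset hBE
    have hsup_lt : sSup S < ⊤ := lt_top_iff_ne_top.mpr hsup
    have hacc : ∀ m : ℕ, μ (Set.accumulate B m) ≤ sSup S := by
      intro m
      refine le_sSup ?_
      refine ⟨Set.accumulate B m, ⟨?_, ?_, ?_⟩, rfl⟩
      · exact MeasurableSet.iUnion fun k => MeasurableSet.iUnion fun _ => hBm k
      · exact Set.iUnion_subset fun k => Set.iUnion_subset fun _ => hBE k
      · exact measure_biUnion_lt_top (Set.finite_Iic m) (fun k _ => hBfin k)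
    have hDle : μ D ≤ sSup S := by
      rw [hD, measure_iUnion_eq_iSup_accumulate]
      exact iSup_le hacc
    have hDge : sSup S ≤ μ D := by
      have h1 : Filter.Tendsto u Filter.atTop (nhds (⨆ k, u k)) := tendsto_atTop_iSup humono
      have h2 : sSup S = ⨆ k, u k := tendsto_nhds_unique hutend h1
      rw [h2]
      exact iSup_le fun k => (hBu k) ▸ measure_mono (Set.subset_iUnion B k)
    have hDeq : μ D = sSup S := le_antisymm hDle hDge
    have hDfin : μ D ≠ ⊤ := hDeq ▸ hsup
    set A := E \ D with hA
    have hAm : MeasurableSet A := hEmeas.diff hDm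
    have hAinf : μ A = ⊤ := by
      by_contra h
      have : μ E ≤ μ D + μ A :=
        le_trans (measure_mono (by intro x hx; by_cases hxD : x ∈ D <;> simp [hA, hx, hxD]))
          (measure_union_le D A)
      rw [hEinf] at this
      exact absurd (top_le_iff.mp this) (ENNReal.add_ne_top.mpr ⟨hDfin, h⟩)
    refine Or.inr ⟨A, hAm, hAinf, ?_, ?_⟩
    · intro C hCA hCm
      by_contra hcon
      push_neg at hcon
      obtain ⟨hC0, hCne⟩ := hcon
      rw [hAinf] at hCne
      have hCfin : μ C < ⊤ := lt_top_iff_ne_top.mpr hCne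
      have hdisj : Disjoint D C := by
        rw [Set.disjoint_right]
        intro x hxC
        exact (hCA hxC).2
      have hunion : μ (D ∪ C) = μ D + μ C := measure_union' hdisj hDm
      have hmem : μ (D ∪ C) ∈ S := by
        refine ⟨D ∪ C, ⟨hDm.union hCm, ?_, ?_⟩, rfl⟩
        · exact Set.union_subset hDE (fun x hx => (hCA hx).1)
        · rw [hunion]; exact ENNReal.add_lt_top.mpr ⟨lt_top_iff_ne_top.mpr hDfin, hCfin⟩
      have hle : μ (D ∪ C) ≤ sSup S := le_sSup hmem
      have hlt : sSup S < μ (D ∪ C) := by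
        rw [hunion, hDeq]
        exact ENNReal.lt_add_right hsup hC0
      exact absurd hle (not_le.mpr hlt)
    · exact aux_setLIntegral_top μ α hAm hc0
        (fun ω hω => hbound ω hω.1) hAinf
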